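/- If 𝒵 is a convex set of nonnegative random variables with E[Z] = 1 that is closed in probability (L⁰), and Ĵ° := inf_{Z ∈ 𝒵} E[Z ln Z] < ∞, then the infimum is attained: there exists Z° ∈ 𝒵 with E[Z° ln Z°] = Ĵ°. -/

import Mathlib

open Real MeasureTheory Filter Topology

/-- `φ(x) = x ln x` for `x > 0`, `φ(0) = 0`. -/
noncomputable def phi (x : ℝ) : ℝ := x * Real.log x

lemma base_ineq (x : ℝ) (hx : 0 ≤ x) : x - 1 ≤ x * Real.log x := by
  rcases eq_or_lt_of_le hx with h | h
  · simp [← h]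
  · have h1 := Real.log_le_sub_one_of_pos (x := x⁻¹) (by positivity)
    rw [Real.log_inv] at h1
    have h2 : x * (-Real.log x) ≤ x * (x⁻¹ - 1) := mul_le_mul_of_nonneg_left h1 h.le
    rw [mul_sub, mul_inv_cancel₀ h.ne'] at h2
    linarith

lemma phi_lb (x : ℝ) (hx : 0 ≤ x) : -(Real.exp (-1)) ≤ phi x := by
  rcases eq_or_lt_of_le hx with h | h
  · simp [phi, ← h]; positivity
  · have h1 := Real.add_one_le_exp (-(Real.log x + 1))
    have h2 : Real.exp (-(Real.log x + 1)) = Real.exp (-1) / x := by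
      rw [show -(Real.log x + 1) = -Real.log x + (-1) by ring, Real.exp_add,
        Real.exp_neg, Real.exp_log h]
      ring
    rw [h2] at h1
    have h3 : x * (-Real.log x) ≤ x * (Real.exp (-1) / x) := by
      apply mul_le_mul_of_nonneg_left _ h.le
      linarith
    rw [mul_div_cancel₀ _ h.ne'] at h3
    unfold phi; linarith

lemma hell (a m : ℝ) (ha : 0 ≤ a) (hm : 0 < m) :
    2*a - 2*Real.sqrt a * Real.sqrt m ≤ a * Real.log a - a * Real.log m := by
  rcases eq_or_lt_of_le ha with h | h
  · simp [← h]
  · set s := Real.sqrt a with hs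
    set u := Real.sqrt m with hu
    have hs0 : 0 < s := Real.sqrt_pos.mpr h
    have hu0 : 0 < u := Real.sqrt_pos.mpr hm
    have hsa : s^2 = a := Real.sq_sqrt h.le
    have hum : u^2 = m := Real.sq_sqrt hm.le
    have hla : Real.log a = 2 * Real.log s := by
      rw [← hsa, Real.log_pow]; norm_num
    have hlm : Real.log m = 2 * Real.log u := by
      rw [← hum, Real.log_pow]; norm_num
    have hb := base_ineq (s/u) (by positivity)
    rw [Real.log_div hs0.ne' hu0.ne'] at hb
    have h4 : u * (s/u - 1) ≤ u * (s/u * (Real.log s - Real.log u)) :=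
      mul_le_mul_of_nonneg_left hb hu0.le
    rw [mul_sub, mul_div_cancel₀ _ hu0.ne', mul_one, ← mul_assoc,
      mul_div_cancel₀ _ hu0.ne'] at h4
    rw [hla, hlm, ← hsa]
    nlinarith [mul_le_mul_of_nonneg_left h4 (by positivity : (0:ℝ) ≤ 2*s)]

lemma key (a b : ℝ) (ha : 0 ≤ a) (hb : 0 ≤ b) :
    (Real.sqrt a - Real.sqrt b)^2 / 2 ≤ phi a + phi b - 2 * phi ((a+b)/2) := by
  rcases eq_or_lt_of_le (by positivity : (0:ℝ) ≤ (a+b)/2) with h | hm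
  · have ha0 : a = 0 := by linarith
    have hb0 : b = 0 := by linarith
    simp [ha0, hb0, phi]
  · have h1 := hell a ((a+b)/2) ha hm
    have h2 := hell b ((a+b)/2) hb hm
    have hr : (Real.sqrt ((a+b)/2))^2 = (a+b)/2 := Real.sq_sqrt hm.le
    have hp : (Real.sqrt a)^2 = a := Real.sq_sqrt ha
    have hq : (Real.sqrt b)^2 = b := Real.sq_sqrt hb
    have hexp : phi a + phi b - 2 * phi ((a+b)/2)
        = (a * Real.log a - a * Real.log ((a+b)/2))
          + (b * Real.log b - b * Real.log ((a+b)/2)) := by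
      unfold phi; ring
    rw [hexp]
    nlinarith [sq_nonneg (2*Real.sqrt ((a+b)/2) - Real.sqrt a - Real.sqrt b),
      Real.sqrt_nonneg a, Real.sqrt_nonneg b, Real.sqrt_nonneg ((a+b)/2)]

/-- If `𝒵` is a convex set of densities closed in probability (L⁰) and
`inf_{Z ∈ 𝒵} E[Z ln Z] < ∞`, then the infimum is attained. -/
theorem entropy_minimizer_exists
    {Ω : Type*} [MeasurableSpace Ω] (μ : Measure Ω) [IsProbabilityMeasure μ]
    (Zs : Set (Ω → ℝ)) (hconv : Convex ℝ Zs)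
    (hdens : ∀ Z ∈ Zs, (∀ᵐ ω ∂μ, 0 ≤ Z ω) ∧ Integrable Z μ ∧ ∫ ω, Z ω ∂μ = 1)
    (hclosed : ∀ (Zn : ℕ → Ω → ℝ) (Z : Ω → ℝ), (∀ n, Zn n ∈ Zs) →
      MeasureTheory.TendstoInMeasure μ Zn Filter.atTop Z → Z ∈ Zs)
    (hfin : ∃ Z ∈ Zs, Integrable (fun ω => phi (Z ω)) μ) :
    ∃ Zo ∈ Zs, Integrable (fun ω => phi (Zo ω)) μ ∧
      ∀ Z ∈ Zs, Integrable (fun ω => phi (Z ω)) μ →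
        ∫ ω, phi (Zo ω) ∂μ ≤ ∫ ω, phi (Z ω) ∂μ := by
  classical
  obtain ⟨Z₀, hZ₀, hZ₀i⟩ := hfin
  set S : Set ℝ :=
    (fun Z : Ω → ℝ => ∫ ω, phi (Z ω) ∂μ) ''
      {Z | Z ∈ Zs ∧ Integrable (fun ω => phi (Z ω)) μ} with hSdef
  have hSne : S.Nonempty := ⟨_, ⟨Z₀, ⟨hZ₀, hZ₀i⟩, rfl⟩⟩
  have hSlb : ∀ x ∈ S, -(Real.exp (-1)) ≤ x := by
    rintro x ⟨Z, ⟨hZ, hZi⟩, rfl⟩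
    have hZ0 := (hdens Z hZ).1
    calc -(Real.exp (-1)) = ∫ _ω, (-(Real.exp (-1)) : ℝ) ∂μ := by simp
      _ ≤ ∫ ω, phi (Z ω) ∂μ :=
        integral_mono_ae (integrable_const _) hZi (hZ0.mono fun ω h => phi_lb _ h)
  have hSbdd : BddBelow S := ⟨-(Real.exp (-1)), hSlb⟩
  set J : ℝ := sInf S with hJdef
  have hJlb : -(Real.exp (-1)) ≤ J := le_csInf hSne hSlb
  have hJ_le : ∀ Z ∈ Zs, Integrable (fun ω => phi (Z ω)) μ → J ≤ ∫ ω, phi (Z ω) ∂μ :=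
    fun Z hZ hi => csInf_le hSbdd ⟨Z, ⟨hZ, hi⟩, rfl⟩
  -- minimizing sequence
  have hseq : ∀ n : ℕ, ∃ Z : Ω → ℝ, (Z ∈ Zs ∧ Integrable (fun ω => phi (Z ω)) μ) ∧
      ∫ ω, phi (Z ω) ∂μ < J + 1/(n+1) := by
    intro n
    obtain ⟨x, ⟨Z, hZ, rfl⟩, hx⟩ :=
      exists_lt_of_csInf_lt hSne (lt_add_of_pos_right J (show (0:ℝ) < 1/((n:ℝ)+1) by positivity))
    exact ⟨Z, hZ, hx⟩
  choose Zn hZn hZn_lt using hseq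
  have hmem : ∀ n, Zn n ∈ Zs := fun n => (hZn n).1
  have hphii : ∀ n, Integrable (fun ω => phi (Zn n ω)) μ := fun n => (hZn n).2
  have hpos : ∀ n, ∀ᵐ ω ∂μ, 0 ≤ Zn n ω := fun n => (hdens _ (hmem n)).1
  have hinti : ∀ n, Integrable (Zn n) μ := fun n => (hdens _ (hmem n)).2.1
  have hJle : ∀ n, J ≤ ∫ ω, phi (Zn n ω) ∂μ := fun n => hJ_le _ (hmem n) (hphii n)
  -- sqrt functions
  set h : ℕ → Ω → ℝ := fun n ω => Real.sqrt (Zn n ω) with hhdef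
  have hsm : ∀ n, AEStronglyMeasurable (h n) μ := fun n =>
    Real.continuous_sqrt.comp_aestronglyMeasurable (hinti n).aestronglyMeasurable
  have hDsm : ∀ n m, AEStronglyMeasurable (fun ω => (h n ω - h m ω)^2) μ := by
    intro n m
    have := ((hsm n).sub (hsm m)).mul ((hsm n).sub (hsm m))
    exact this.congr (Eventually.of_forall fun ω => (pow_two _).symm)
  -- key integral estimate
  have hD : ∀ n m : ℕ, ∫ ω, (h n ω - h m ω)^2 ∂μ ≤ 2*(1/((n:ℝ)+1) + 1/((m:ℝ)+1)) := by
    intro n m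
    have hMmem : ((2:ℝ)⁻¹) • Zn n + ((2:ℝ)⁻¹) • Zn m ∈ Zs :=
      hconv (hmem n) (hmem m) (by norm_num) (by norm_num) (by norm_num)
    set M : Ω → ℝ := ((2:ℝ)⁻¹) • Zn n + ((2:ℝ)⁻¹) • Zn m with hMdef
    have hMeq : ∀ ω, M ω = (Zn n ω + Zn m ω)/2 := by
      intro ω; simp [hMdef]; ring
    have hae : ∀ᵐ ω ∂μ, 0 ≤ Zn n ω ∧ 0 ≤ Zn m ω := (hpos n).and (hpos m)
    have hkey : ∀ᵐ ω ∂μ, (h n ω - h m ω)^2 / 2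
        ≤ phi (Zn n ω) + phi (Zn m ω) - 2 * phi (M ω) := by
      refine hae.mono fun ω ⟨h1, h2⟩ => ?_
      rw [hMeq]
      exact key _ _ h1 h2
    have hMsm : AEStronglyMeasurable (fun ω => phi (M ω)) μ :=
      Real.continuous_mul_log.comp_aestronglyMeasurable
        (hdens M hMmem).2.1.aestronglyMeasurable
    have hMint : Integrable (fun ω => phi (M ω)) μ := by
      refine Integrable.mono'
        (((((hphii n).add (hphii m)).div_const 2).add
          (integrable_const (2*Real.exp (-1))))) hMsm ?_
      refine hae.mono fun ω ⟨h1, h2⟩ => ?_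
      have hub : phi (M ω) ≤ (phi (Zn n ω) + phi (Zn m ω))/2 := by
        have := key _ _ h1 h2
        have hnn : 0 ≤ (Real.sqrt (Zn n ω) - Real.sqrt (Zn m ω))^2/2 := by positivity
        rw [hMeq]; linarith
      have hlbM : -(Real.exp (-1)) ≤ phi (M ω) := by
        refine phi_lb _ ?_
        rw [hMeq]; linarith
      have hlbs : -(Real.exp (-1)) ≤ (phi (Zn n ω) + phi (Zn m ω))/2 := by linarith
      rw [Real.norm_eq_abs, abs_le]
      constructor <;> simp only [Pi.add_apply] <;> nlinarith [Real.exp_pos (-1)]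
    have hJM : J ≤ ∫ ω, phi (M ω) ∂μ := hJ_le _ hMmem hMint
    have hg : Integrable (fun ω => 2*(phi (Zn n ω) + phi (Zn m ω) - 2 * phi (M ω))) μ :=
      (((hphii n).add (hphii m)).sub (hMint.const_mul 2)).const_mul 2
    have hDi : Integrable (fun ω => (h n ω - h m ω)^2) μ := by
      refine Integrable.mono' hg (hDsm n m) ?_
      refine hkey.mono fun ω hω => ?_
      show ‖(h n ω - h m ω)^2‖ ≤ 2*(phi (Zn n ω) + phi (Zn m ω) - 2 * phi (M ω))
      rw [Real.norm_eq_abs, abs_of_nonneg (by positivity)]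
      linarith
    have hle : ∫ ω, (h n ω - h m ω)^2 ∂μ
        ≤ ∫ ω, 2*(phi (Zn n ω) + phi (Zn m ω) - 2 * phi (M ω)) ∂μ := by
      refine integral_mono_ae hDi hg (hkey.mono fun ω hω => ?_)
      show (h n ω - h m ω)^2 ≤ 2*(phi (Zn n ω) + phi (Zn m ω) - 2 * phi (M ω))
      linarith
    have hgval : ∫ ω, 2*(phi (Zn n ω) + phi (Zn m ω) - 2 * phi (M ω)) ∂μ
        = 2*((∫ ω, phi (Zn n ω) ∂μ) + (∫ ω, phi (Zn m ω) ∂μ) - 2*∫ ω, phi (M ω) ∂μ) := by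
      have hs1 : Integrable (fun ω => phi (Zn n ω) + phi (Zn m ω)) μ :=
        (hphii n).add (hphii m)
      have hs2 : Integrable (fun ω => 2 * phi (M ω)) μ := hMint.const_mul 2
      rw [integral_const_mul, integral_sub hs1 hs2,
        integral_add (hphii n) (hphii m), integral_const_mul]
    rw [hgval] at hle
    have := hZn_lt n
    have := hZn_lt m
    linarith
  -- Memℒp and Lp elements
  have hmem2 : ∀ n, MemLp (h n) 2 μ := by
    intro n
    rw [memLp_two_iff_integrable_sq (hsm n)]
    exact (hinti n).congr ((hpos n).mono fun ω hω => (Real.sq_sqrt hω).symm)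
  set G : ℕ → Lp ℝ 2 μ := fun n => (hmem2 n).toLp (h n) with hGdef
  have hdist : ∀ n m : ℕ, dist (G n) (G m)^2 ≤ 2*(1/((n:ℝ)+1) + 1/((m:ℝ)+1)) := by
    intro n m
    have hsub : (⇑(G n - G m) : Ω → ℝ) =ᵐ[μ] fun ω => h n ω - h m ω := by
      filter_upwards [Lp.coeFn_sub (G n) (G m), (hmem2 n).coeFn_toLp,
        (hmem2 m).coeFn_toLp] with ω h1 h2 h3
      simp only [hGdef] at h1 h2 h3 ⊢
      rw [h1, Pi.sub_apply, h2, h3]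
    have hnorm : dist (G n) (G m)^2 = ∫ ω, (h n ω - h m ω)^2 ∂μ := by
      rw [dist_eq_norm, ← real_inner_self_eq_norm_sq, L2.inner_def]
      refine integral_congr_ae ?_
      filter_upwards [hsub] with ω hω
      rw [hω]
      simp [RCLike.inner_apply, starRingEnd_apply, pow_two]
    rw [hnorm]
    exact hD n m
  have hcauchy : CauchySeq G := by
    rw [Metric.cauchySeq_iff']
    intro ε hε
    obtain ⟨N, hN⟩ := exists_nat_gt (4/ε^2)
    refine ⟨N, fun n hn => ?_⟩
    have h1 : 1/((n:ℝ)+1) ≤ 1/((N:ℝ)+1) := by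
      apply one_div_le_one_div_of_le (by positivity)
      exact_mod_cast by omega
    have h2 : dist (G n) (G N)^2 ≤ 4/((N:ℝ)+1) := by
      have h5 := hdist n N
      have h4 : 4/((N:ℝ)+1) = 4*(1/((N:ℝ)+1)) := by ring
      linarith
    have h3 : 4/((N:ℝ)+1) < ε^2 := by
      rw [div_lt_iff₀ (by positivity)]
      rw [div_lt_iff₀ (by positivity)] at hN
      nlinarith [sq_nonneg ε]
    exact lt_of_pow_lt_pow_left₀ 2 hε.le (by linarith)
  obtain ⟨Glim, hGlim⟩ := cauchySeq_tendsto_of_complete hcauchy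
  have heLp : Tendsto (fun n => eLpNorm (h n - ⇑Glim) 2 μ) atTop (𝓝 0) := by
    have heq : ∀ n, eLpNorm (h n - ⇑Glim) 2 μ = ENNReal.ofReal (dist (G n) Glim) := by
      intro n
      have h1 : eLpNorm (h n - ⇑Glim) 2 μ = eLpNorm (⇑(G n) - ⇑Glim) 2 μ := by
        refine eLpNorm_congr_ae ?_
        filter_upwards [(hmem2 n).coeFn_toLp] with ω hω
        simp [hGdef, hω]
      have h2 : eLpNorm (⇑(G n) - ⇑Glim) 2 μ < ⊤ := by
        have := Lp.eLpNorm_lt_top (G n - Glim)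
        rwa [eLpNorm_congr_ae (Lp.coeFn_sub (G n) Glim)] at this
      rw [h1, Lp.dist_def, ENNReal.ofReal_toReal h2.ne]
    rw [show (0:ENNReal) = ENNReal.ofReal 0 by simp]
    refine Tendsto.congr (fun n => (heq n).symm) ?_
    exact ENNReal.tendsto_ofReal (tendsto_iff_dist_tendsto_zero.mp hGlim)
  have hinmeas : TendstoInMeasure μ h atTop ⇑Glim :=
    tendstoInMeasure_of_tendsto_eLpNorm (by norm_num) hsm
      (Lp.aestronglyMeasurable Glim) heLp
  obtain ⟨ns, hns_mono, hns_ae⟩ := hinmeas.exists_seq_tendsto_ae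
  set Zo : Ω → ℝ := fun ω => (Glim ω)^2 with hZodef
  have hall : ∀ᵐ ω ∂μ, ∀ n, 0 ≤ Zn n ω := ae_all_iff.mpr hpos
  have hZae : ∀ᵐ ω ∂μ, Tendsto (fun k => Zn (ns k) ω) atTop (𝓝 (Zo ω)) := by
    filter_upwards [hns_ae, hall] with ω h1 h2
    exact Tendsto.congr (fun k => Real.sq_sqrt (h2 (ns k))) (h1.pow 2)
  have hZo_mem : Zo ∈ Zs :=
    hclosed (fun k => Zn (ns k)) Zo (fun k => hmem _)
      (tendstoInMeasure_of_tendsto_ae (fun k => (hinti _).aestronglyMeasurable) hZae)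
  -- limit of integrals
  have hJlim : Tendsto (fun n => ∫ ω, phi (Zn n ω) ∂μ) atTop (𝓝 J) := by
    refine tendsto_of_tendsto_of_tendsto_of_le_of_le tendsto_const_nhds ?_
      hJle (fun n => (hZn_lt n).le)
    have := tendsto_one_div_add_atTop_nhds_zero_nat (𝕜 := ℝ)
    have h2 : Tendsto (fun n : ℕ => J + 1/((n:ℝ)+1)) atTop (𝓝 (J + 0)) :=
      tendsto_const_nhds.add this
    simpa using h2
  have hJlim' : Tendsto (fun k => ∫ ω, phi (Zn (ns k) ω) ∂μ) atTop (𝓝 J) :=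
    hJlim.comp hns_mono.tendsto_atTop
  -- Fatou
  set c : ℝ := Real.exp (-1) with hcdef
  set fk : ℕ → Ω → ENNReal := fun k ω => ENNReal.ofReal (phi (Zn (ns k) ω) + c) with hfkdef
  have hfk_meas : ∀ k, AEMeasurable (fk k) μ := by
    intro k
    refine ENNReal.measurable_ofReal.comp_aemeasurable ?_
    exact ((hphii (ns k)).aestronglyMeasurable.aemeasurable.add_const c)
  have hfk_int : ∀ k, ∫⁻ ω, fk k ω ∂μ
      = ENNReal.ofReal ((∫ ω, phi (Zn (ns k) ω) ∂μ) + c) := by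
    intro k
    have hi1 : Integrable (fun ω => phi (Zn (ns k) ω) + c) μ :=
      (hphii (ns k)).add (integrable_const c)
    have hnn1 : 0 ≤ᵐ[μ] fun ω => phi (Zn (ns k) ω) + c := by
      filter_upwards [hpos (ns k)] with ω hω
      have := phi_lb _ hω
      show (0:ℝ) ≤ phi (Zn (ns k) ω) + c
      rw [hcdef]; linarith
    rw [← ofReal_integral_eq_lintegral_ofReal hi1 hnn1]
    congr 1
    rw [integral_add (hphii (ns k)) (integrable_const c), integral_const]
    simp
  have hliminf : liminf (fun k => ∫⁻ ω, fk k ω ∂μ) atTop = ENNReal.ofReal (J + c) := by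
    have : Tendsto (fun k => ∫⁻ ω, fk k ω ∂μ) atTop (𝓝 (ENNReal.ofReal (J + c))) := by
      rw [funext hfk_int]
      exact ENNReal.tendsto_ofReal (hJlim'.add_const c)
    exact this.liminf_eq
  have hFatou : ∫⁻ ω, ENNReal.ofReal (phi (Zo ω) + c) ∂μ ≤ ENNReal.ofReal (J + c) := by
    have hcong : ∀ᵐ ω ∂μ, ENNReal.ofReal (phi (Zo ω) + c)
        = liminf (fun k => fk k ω) atTop := by
      filter_upwards [hZae] with ω hω
      have h1 : Tendsto (fun k => phi (Zn (ns k) ω)) atTop (𝓝 (phi (Zo ω))) :=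
        (Real.continuous_mul_log.tendsto _).comp hω
      have h2 : Tendsto (fun k => fk k ω) atTop (𝓝 (ENNReal.ofReal (phi (Zo ω) + c))) :=
        (ENNReal.tendsto_ofReal (h1.add_const c))
      exact h2.liminf_eq.symm
    rw [lintegral_congr_ae hcong, ← hliminf]
    exact lintegral_liminf_le' hfk_meas
  have hZo_nonneg : ∀ ω, 0 ≤ Zo ω := fun ω => sq_nonneg _
  have hZo_sm : AEStronglyMeasurable Zo μ := by
    have hG := Lp.aestronglyMeasurable Glim
    exact (hG.mul hG).congr (Eventually.of_forall fun ω => (pow_two _).symm)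
  have hphiZo_sm : AEStronglyMeasurable (fun ω => phi (Zo ω)) μ :=
    Real.continuous_mul_log.comp_aestronglyMeasurable hZo_sm
  have hψnn : 0 ≤ᵐ[μ] fun ω => phi (Zo ω) + c := by
    refine Eventually.of_forall fun ω => ?_
    have := phi_lb _ (hZo_nonneg ω)
    show (0:ℝ) ≤ phi (Zo ω) + c
    rw [hcdef]; linarith
  have hψint : Integrable (fun ω => phi (Zo ω) + c) μ := by
    refine ⟨hphiZo_sm.add aestronglyMeasurable_const, ?_⟩
    rw [hasFiniteIntegral_iff_ofReal hψnn]
    exact lt_of_le_of_lt hFatou ENNReal.ofReal_lt_top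
  have hphiZo_int : Integrable (fun ω => phi (Zo ω)) μ := by
    refine (hψint.sub (integrable_const c)).congr (Eventually.of_forall fun ω => ?_)
    simp
  have hle : ∫ ω, phi (Zo ω) ∂μ ≤ J := by
    have h1 : ENNReal.ofReal (∫ ω, (phi (Zo ω) + c) ∂μ) ≤ ENNReal.ofReal (J + c) := by
      rw [ofReal_integral_eq_lintegral_ofReal hψint hψnn]
      exact hFatou
    have h2 : ∫ ω, (phi (Zo ω) + c) ∂μ ≤ J + c := by
      have hc0 : (0:ℝ) ≤ J + c := by
        have : (0:ℝ) < c := Real.exp_pos _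
        linarith
      exact (ENNReal.ofReal_le_ofReal_iff hc0).mp h1
    rw [integral_add hphiZo_int (integrable_const c), integral_const] at h2
    simp at h2
    linarith
  exact ⟨Zo, hZo_mem, hphiZo_int, fun Z hZ hi => le_trans hle (hJ_le Z hZ hi)⟩
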